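/- arXiv:1412.4241 — 4 statements merged into one kernel-verified Lean document; each statement's English description precedes it below -/
import Mathlib

section
/- Consider M particles with positions x_1,…,x_M ∈ ℤ and colors σ_i, σ'_i ∈ {a,b}. Define ξ(y) = #{i : x_i = y, σ_i = a} and ξ'(y) = #{i : x_i = y, σ'_i = a}, and suppose ξ' ≼ ξ (right tails of ξ' dominated by right tails of ξ) and that the number of a-particles is equal: #{i : σ_i = a} = #{i : σ'_i = a}. Then there exists a bijective relabeling of the σ'-colors among particles at equal positions (i.e., a configuration σ'' equivalent to σ' in the sense that it induces the same occupation numbers ξ') together with a splitting of (x, σ, σ'') into married pairs and singletons with no discrepancies. -/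
open Finset

namespace TailSplitAux

variable {M : ℕ}

def swapFn (a b k : Fin M) : Fin M := if k = a then b else if k = b then a else k

lemma swapFn_invol (a b k : Fin M) : swapFn a b (swapFn a b k) = k := by
  unfold swapFn; split_ifs <;> simp_all

lemma swapFn_eq_self {a b k : Fin M} (ha : k ≠ a) (hb : k ≠ b) : swapFn a b k = k := by
  unfold swapFn; split_ifs <;> simp_all

lemma swapFn_left (a b : Fin M) : swapFn a b a = b := by
  unfold swapFn; split_ifs <;> simp_all

lemma swapFn_x (x : Fin M → ℤ) {a b : Fin M} (hx : x a = x b) (k : Fin M) :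
    x (swapFn a b k) = x k := by
  unfold swapFn; split_ifs <;> simp_all

lemma swapFn_mem {s : Finset (Fin M)} {a b : Fin M} (ha : a ∈ s) (hb : b ∈ s)
    {k : Fin M} (hk : k ∈ s) : swapFn a b k ∈ s := by
  unfold swapFn; split_ifs <;> assumption

def tailC (x : Fin M → ℤ) (s : Finset (Fin M)) (σ : Fin M → Bool) (y : ℤ) : ℕ :=
  (s.filter fun i => y ≤ x i ∧ σ i = true).card

def siteC (x : Fin M → ℤ) (s : Finset (Fin M)) (σ : Fin M → Bool) (y : ℤ) : ℕ :=
  (s.filter fun i => x i = y ∧ σ i = true).card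

lemma swap_card (x : Fin M → ℤ) (s : Finset (Fin M)) (σ : Fin M → Bool) {a b : Fin M}
    (ha : a ∈ s) (hb : b ∈ s) (hx : x a = x b) (q : ℤ → Prop) [DecidablePred q] :
    (s.filter fun k => q (x k) ∧ σ (swapFn a b k) = true).card
      = (s.filter fun k => q (x k) ∧ σ k = true).card := by
  apply Finset.card_bij (fun k _ => swapFn a b k)
  · intro k hk
    simp only [mem_filter] at *
    exact ⟨swapFn_mem ha hb hk.1, by rw [swapFn_x x hx]; exact hk.2.1, hk.2.2⟩
  · intro k hk k' hk' h
    have := congrArg (swapFn a b) h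
    rwa [swapFn_invol, swapFn_invol] at this
  · intro m hm
    refine ⟨swapFn a b m, ?_, swapFn_invol a b m⟩
    simp only [mem_filter] at *
    exact ⟨swapFn_mem ha hb hm.1, by rw [swapFn_x x hx]; exact hm.2.1,
      by rw [swapFn_invol]; exact hm.2.2⟩

lemma card_filter_erase (s : Finset (Fin M)) {a : Fin M} (ha : a ∈ s)
    (p : Fin M → Prop) [DecidablePred p] :
    (s.filter p).card = ((s.erase a).filter p).card + (if p a then 1 else 0) := by
  rw [Finset.filter_erase]
  by_cases hpa : p a
  · rw [if_pos hpa, Finset.card_erase_of_mem (mem_filter.mpr ⟨ha, hpa⟩)]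
    have h1 : 1 ≤ (s.filter p).card := card_pos.mpr ⟨a, mem_filter.mpr ⟨ha, hpa⟩⟩
    omega
  · rw [if_neg hpa, Finset.erase_eq_of_notMem (by simp [mem_filter, hpa])]
    omega

lemma tail_decomp (x : Fin M → ℤ) (s : Finset (Fin M)) (σ : Fin M → Bool) (y : ℤ) :
    tailC x s σ y = siteC x s σ y + tailC x s σ (y + 1) := by
  unfold tailC siteC
  have hsplit : (s.filter fun i => y ≤ x i ∧ σ i = true)
      = (s.filter fun i => x i = y ∧ σ i = true)
        ∪ (s.filter fun i => y + 1 ≤ x i ∧ σ i = true) := by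
    ext k
    simp only [mem_filter, mem_union]
    constructor
    · rintro ⟨hk, h1, h2⟩
      by_cases h : x k = y
      · exact Or.inl ⟨hk, h, h2⟩
      · exact Or.inr ⟨hk, by omega, h2⟩
    · rintro (⟨hk, h1, h2⟩ | ⟨hk, h1, h2⟩) <;> exact ⟨hk, by omega, h2⟩
  rw [hsplit, Finset.card_union_of_disjoint]
  rw [Finset.disjoint_left]
  rintro k hk1 hk2
  simp only [mem_filter] at hk1 hk2
  omega

lemma exists_bounds (x : Fin M → ℤ) : ∃ C B : ℤ, (∀ i, C ≤ x i) ∧ (∀ i, x i < B) := by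
  refine ⟨-(∑ i, |x i|), (∑ i, |x i|) + 1, ?_, ?_⟩ <;> intro i <;>
    have h1 : |x i| ≤ ∑ j, |x j| :=
      Finset.single_le_sum (fun j _ => abs_nonneg (x j)) (mem_univ i) <;>
    have h2 : x i ≤ |x i| := le_abs_self _ <;>
    have h3 : -|x i| ≤ x i := neg_abs_le _ <;>
    omega

lemma tail_zero (x : Fin M → ℤ) (s : Finset (Fin M)) (σ : Fin M → Bool) {B y : ℤ}
    (hB : ∀ i, x i < B) (hy : B ≤ y) : tailC x s σ y = 0 := by
  unfold tailC
  rw [card_eq_zero, filter_eq_empty_iff]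
  intro k _ hk
  have := hB k
  omega

lemma tail_total (x : Fin M → ℤ) (s : Finset (Fin M)) (σ : Fin M → Bool) {C : ℤ}
    (hC : ∀ i, C ≤ x i) : tailC x s σ C = (s.filter fun k => σ k = true).card := by
  unfold tailC
  congr 1
  apply filter_congr
  intro k _
  simp [hC k]

lemma site_zero_of_not_img (x : Fin M → ℤ) (s : Finset (Fin M)) (σ : Fin M → Bool) {z : ℤ}
    (h : z ∉ s.image x) : siteC x s σ z = 0 := by
  unfold siteC
  rw [card_eq_zero, filter_eq_empty_iff]
  intro k hk hpk
  exact h (mem_image.mpr ⟨k, hk, hpk.1⟩)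

lemma tail_eq_of_site_eq (x : Fin M → ℤ) (s : Finset (Fin M)) (σa σb : Fin M → Bool) (y0 : ℤ)
    (hsite : ∀ z, y0 ≤ z → siteC x s σa z = siteC x s σb z) :
    ∀ y, y0 ≤ y → tailC x s σa y = tailC x s σb y := by
  obtain ⟨C, B, hC, hB⟩ := exists_bounds x
  have key : ∀ k : ℕ, ∀ y, y0 ≤ y → B - k ≤ y → tailC x s σa y = tailC x s σb y := by
    intro k
    induction k with
    | zero =>
      intro y hy hBy
      rw [tail_zero x s σa hB (by push_cast at hBy; omega),
        tail_zero x s σb hB (by push_cast at hBy; omega)]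
    | succ k ih =>
      intro y hy hBy
      by_cases hyB : B ≤ y
      · rw [tail_zero x s σa hB hyB, tail_zero x s σb hB hyB]
      · rw [tail_decomp x s σa y, tail_decomp x s σb y, hsite y hy,
          ih (y + 1) (by omega) (by push_cast at hBy ⊢; omega)]
  intro y hy
  exact key (B - y).toNat y hy (by omega)

lemma tail_lt (x : Fin M → ℤ) (s : Finset (Fin M)) (σa σb : Fin M → Bool) (y0 w : ℤ)
    (htop : ∀ y, y0 < y → tailC x s σa y = tailC x s σb y)
    (hsite_top : siteC x s σa y0 < siteC x s σb y0)
    (hsite_le : ∀ z, w < z → z < y0 → siteC x s σa z ≤ siteC x s σb z) :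
    ∀ y, w < y → y ≤ y0 → tailC x s σa y < tailC x s σb y := by
  have key : ∀ k : ℕ, ∀ y, w < y → y ≤ y0 → y0 - (k : ℤ) ≤ y →
      tailC x s σa y < tailC x s σb y := by
    intro k
    induction k with
    | zero =>
      intro y h1 h2 h3
      have hy : y = y0 := by omega
      subst hy
      rw [tail_decomp x s σa y, tail_decomp x s σb y, htop (y + 1) (by omega)]
      omega
    | succ k ih =>
      intro y h1 h2 h3
      by_cases hy : y = y0
      · subst hy
        rw [tail_decomp x s σa y, tail_decomp x s σb y, htop (y + 1) (by omega)]
        omega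
      · have h4 : y < y0 := lt_of_le_of_ne h2 hy
        have h5 := ih (y + 1) (by omega) (by omega) (by push_cast at h3 ⊢; omega)
        have h6 := hsite_le y h1 h4
        rw [tail_decomp x s σa y, tail_decomp x s σb y]
        omega
  intro y h1 h2
  exact key (y0 - y).toNat y h1 h2 (by omega)


lemma tail_erase_true (x : Fin M → ℤ) (s : Finset (Fin M)) (σ : Fin M → Bool) {a : Fin M}
    (ha : a ∈ s) (hσ : σ a = true) (y : ℤ) :
    tailC x s σ y = tailC x (s.erase a) σ y + (if y ≤ x a then 1 else 0) := by
  unfold tailC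
  rw [card_filter_erase s ha]
  congr 1
  by_cases h : y ≤ x a <;> simp [h, hσ]

lemma tail_erase_false (x : Fin M → ℤ) (s : Finset (Fin M)) (σ : Fin M → Bool) {a : Fin M}
    (ha : a ∈ s) (hσ : σ a = false) (y : ℤ) :
    tailC x s σ y = tailC x (s.erase a) σ y := by
  unfold tailC
  rw [card_filter_erase s ha]
  simp [hσ]

lemma site_erase_true (x : Fin M → ℤ) (s : Finset (Fin M)) (σ : Fin M → Bool) {a : Fin M}
    (ha : a ∈ s) (hσ : σ a = true) (y : ℤ) :
    siteC x s σ y = siteC x (s.erase a) σ y + (if x a = y then 1 else 0) := by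
  unfold siteC
  rw [card_filter_erase s ha]
  congr 1
  by_cases h : x a = y <;> simp [h, hσ]

lemma site_erase_false (x : Fin M → ℤ) (s : Finset (Fin M)) (σ : Fin M → Bool) {a : Fin M}
    (ha : a ∈ s) (hσ : σ a = false) (y : ℤ) :
    siteC x s σ y = siteC x (s.erase a) σ y := by
  unfold siteC
  rw [card_filter_erase s ha]
  simp [hσ]

lemma count_erase_true (s : Finset (Fin M)) (σ : Fin M → Bool) {a : Fin M}
    (ha : a ∈ s) (hσ : σ a = true) :
    (s.filter fun k => σ k = true).card
      = ((s.erase a).filter fun k => σ k = true).card + 1 := by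
  rw [card_filter_erase s ha]
  simp [hσ]

lemma count_erase_false (s : Finset (Fin M)) (σ : Fin M → Bool) {a : Fin M}
    (ha : a ∈ s) (hσ : σ a = false) :
    (s.filter fun k => σ k = true).card
      = ((s.erase a).filter fun k => σ k = true).card := by
  rw [card_filter_erase s ha]
  simp [hσ]

lemma site_le_card (x : Fin M → ℤ) (s : Finset (Fin M)) (σ : Fin M → Bool) (y : ℤ) :
    siteC x s σ y ≤ (s.filter fun k => x k = y).card := by
  apply card_le_card
  intro k hk
  simp only [mem_filter] at *
  exact ⟨hk.1, hk.2.1⟩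

/-- Base case: if the occupation numbers already coincide, take `σ'' = σ` on `s`. -/
lemma base_case (x : Fin M → ℤ) (σ : Fin M → Bool) (s : Finset (Fin M)) (σ' : Fin M → Bool)
    (hsite : ∀ y, siteC x s σ' y = siteC x s σ y) :
    ∃ (σ'' : Fin M → Bool) (P : Fin M → Option (Fin M)),
      (∀ k, k ∉ s → σ'' k = σ' k) ∧ (∀ k, k ∉ s → P k = none) ∧
      (∀ y, siteC x s σ'' y = siteC x s σ' y) ∧
      (∀ k ∈ s, P k = none → σ k = σ'' k) ∧
      (∀ k ∈ s, ∀ l, P k = some l → l ∈ s ∧ P l = some k ∧ k ≠ l) ∧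
      (∀ k ∈ s, ∀ l, P k = some l →
        (σ k = true ∧ σ'' k = false ∧ σ l = false ∧ σ'' l = true ∧ x l < x k) ∨
        (σ k = false ∧ σ'' k = true ∧ σ l = true ∧ σ'' l = false ∧ x k < x l)) := by
  refine ⟨fun k => if k ∈ s then σ k else σ' k, fun _ => none, ?_, ?_, ?_, ?_, ?_, ?_⟩
  · intro k hk; simp [hk]
  · intro k _; rfl
  · intro y
    have h1 : siteC x s (fun k => if k ∈ s then σ k else σ' k) y = siteC x s σ y := by
      unfold siteC
      congr 1
      apply filter_congr
      intro k hk
      simp [hk]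
    rw [h1, ← hsite y]
  · intro k hk _; simp [hk]
  · intro k _ l h; simp at h
  · intro k _ l h; simp at h

lemma aux (x : Fin M → ℤ) (σ : Fin M → Bool) :
    ∀ n : ℕ, ∀ s : Finset (Fin M), s.card ≤ n → ∀ σ' : Fin M → Bool,
    (∀ y, tailC x s σ' y ≤ tailC x s σ y) →
    (s.filter fun i => σ i = true).card = (s.filter fun i => σ' i = true).card →
    ∃ (σ'' : Fin M → Bool) (P : Fin M → Option (Fin M)),
      (∀ k, k ∉ s → σ'' k = σ' k) ∧ (∀ k, k ∉ s → P k = none) ∧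
      (∀ y, siteC x s σ'' y = siteC x s σ' y) ∧
      (∀ k ∈ s, P k = none → σ k = σ'' k) ∧
      (∀ k ∈ s, ∀ l, P k = some l → l ∈ s ∧ P l = some k ∧ k ≠ l) ∧
      (∀ k ∈ s, ∀ l, P k = some l →
        (σ k = true ∧ σ'' k = false ∧ σ l = false ∧ σ'' l = true ∧ x l < x k) ∨
        (σ k = false ∧ σ'' k = true ∧ σ l = true ∧ σ'' l = false ∧ x k < x l)) := by
  intro n
  induction n with
  | zero =>
    intro s hcard σ' _ _
    have hs : s = ∅ := card_eq_zero.mp (Nat.le_zero.mp hcard)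
    subst hs
    apply base_case
    intro y
    simp [siteC]
  | succ n IH =>
    intro s hcard σ' htail hcount
    by_cases hbase : ∀ y, siteC x s σ' y = siteC x s σ y
    · exact base_case x σ s σ' hbase
    push_neg at hbase
    obtain ⟨y1, hy1⟩ := hbase
    obtain ⟨C, B, hC, hB⟩ := exists_bounds x
    -- the set of sites where occupation numbers differ
    set T : Finset ℤ := (s.image x).filter
      (fun z => siteC x s σ' z ≠ siteC x s σ z) with hT
    have hTne : T.Nonempty := by
      refine ⟨y1, mem_filter.mpr ⟨?_, hy1⟩⟩
      by_contra h
      rw [site_zero_of_not_img x s σ' h, site_zero_of_not_img x s σ h] at hy1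
      exact hy1 rfl
    set ys : ℤ := T.max' hTne with hys
    have hysT : ys ∈ T := T.max'_mem hTne
    have hysne : siteC x s σ' ys ≠ siteC x s σ ys := (mem_filter.mp hysT).2
    have hysimg : ys ∈ s.image x := (mem_filter.mp hysT).1
    have hsite_above : ∀ z, ys < z → siteC x s σ' z = siteC x s σ z := by
      intro z hz
      by_cases hzi : z ∈ s.image x
      · by_contra h
        have hzT : z ∈ T := mem_filter.mpr ⟨hzi, h⟩
        have := T.le_max' z hzT
        omega
      · rw [site_zero_of_not_img x s σ' hzi, site_zero_of_not_img x s σ hzi]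
    have htail_above : ∀ y, ys < y → tailC x s σ' y = tailC x s σ y := by
      intro y hy
      exact tail_eq_of_site_eq x s σ' σ (ys + 1)
        (fun z hz => hsite_above z (by omega)) y (by omega)
    have hylt : siteC x s σ' ys < siteC x s σ ys := by
      have h1 := htail ys
      rw [tail_decomp x s σ' ys, tail_decomp x s σ ys,
        htail_above (ys + 1) (by omega)] at h1
      omega
    -- the set of sites below ys where σ' has strictly more particles
    set W : Finset ℤ := (s.image x).filter
      (fun z => z < ys ∧ siteC x s σ z < siteC x s σ' z) with hW
    have hWne : W.Nonempty := by
      by_contra hWe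
      rw [not_nonempty_iff_eq_empty] at hWe
      have hle : ∀ z, z < ys → siteC x s σ' z ≤ siteC x s σ z := by
        intro z hz
        by_cases hzi : z ∈ s.image x
        · by_contra h
          have : z ∈ W := mem_filter.mpr ⟨hzi, hz, by omega⟩
          rw [hWe] at this
          exact absurd this (notMem_empty z)
        · rw [site_zero_of_not_img x s σ' hzi, site_zero_of_not_img x s σ hzi]
      have hCys : C ≤ ys := by
        obtain ⟨k, _, hk⟩ := mem_image.mp hysimg
        have := hC k
        omega
      have hlt := tail_lt x s σ' σ ys (C - 1) htail_above hylt
        (fun z _ hz => hle z hz) C (by omega) hCys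
      rw [tail_total x s σ' hC, tail_total x s σ hC] at hlt
      omega
    set w : ℤ := W.max' hWne with hw
    have hwW : w ∈ W := W.max'_mem hWne
    have hwlt : w < ys := (mem_filter.mp hwW).2.1
    have hwsite : siteC x s σ w < siteC x s σ' w := (mem_filter.mp hwW).2.2
    have hsite_mid : ∀ z, w < z → z < ys → siteC x s σ' z ≤ siteC x s σ z := by
      intro z h1 h2
      by_cases hzi : z ∈ s.image x
      · by_contra h
        have : z ∈ W := mem_filter.mpr ⟨hzi, h2, by omega⟩
        have := W.le_max' z this
        omega
      · rw [site_zero_of_not_img x s σ' hzi, site_zero_of_not_img x s σ hzi]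
    have htail_strict : ∀ y, w < y → y ≤ ys → tailC x s σ' y < tailC x s σ y :=
      tail_lt x s σ' σ ys w htail_above hylt hsite_mid
    -- choose particle i at ys with σ i = true
    obtain ⟨i, hi⟩ : ∃ i, i ∈ s ∧ x i = ys ∧ σ i = true := by
      have : 0 < siteC x s σ ys := by omega
      obtain ⟨i, hi⟩ := card_pos.mp this
      have := mem_filter.mp hi
      exact ⟨i, this.1, this.2⟩
    -- choose particle i' at ys with σ' i' = false
    obtain ⟨i', hi'⟩ : ∃ i', i' ∈ s ∧ x i' = ys ∧ σ' i' = false := by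
      have hsub : ¬ (s.filter fun k => x k = ys) ⊆
          (s.filter fun k => x k = ys ∧ σ' k = true) := by
        intro h
        have h1 := card_le_card h
        have h2 := site_le_card x s σ ys
        have h3 := hylt
        unfold siteC at h2 h3
        omega
      obtain ⟨a, ha1, ha2⟩ := Finset.not_subset.mp hsub
      simp only [mem_filter, not_and] at ha1 ha2
      refine ⟨a, ha1.1, ha1.2, ?_⟩
      have := ha2 ha1.1 ha1.2
      simp only [Bool.not_eq_true] at this
      exact this
    -- choose particle j at w with σ j = false
    obtain ⟨j, hj⟩ : ∃ j, j ∈ s ∧ x j = w ∧ σ j = false := by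
      have hsub : ¬ (s.filter fun k => x k = w) ⊆
          (s.filter fun k => x k = w ∧ σ k = true) := by
        intro h
        have h1 := card_le_card h
        have h2 := site_le_card x s σ' w
        have h3 := hwsite
        unfold siteC at h2 h3
        omega
      obtain ⟨a, ha1, ha2⟩ := Finset.not_subset.mp hsub
      simp only [mem_filter, not_and] at ha1 ha2
      refine ⟨a, ha1.1, ha1.2, ?_⟩
      have := ha2 ha1.1 ha1.2
      simp only [Bool.not_eq_true] at this
      exact this
    -- choose particle j' at w with σ' j' = true
    obtain ⟨j', hj'⟩ : ∃ j', j' ∈ s ∧ x j' = w ∧ σ' j' = true := by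
      have : 0 < siteC x s σ' w := by omega
      obtain ⟨a, ha⟩ := card_pos.mp this
      have := mem_filter.mp ha
      exact ⟨a, this.1, this.2⟩
    have hij : i ≠ j := fun h => by rw [h, hj.2.1] at hi; omega
    have hij' : i ≠ j' := fun h => by rw [h, hj'.2.1] at hi; omega
    have hi'j : i' ≠ j := fun h => by rw [h, hj.2.1] at hi'; omega
    have hi'j' : i' ≠ j' := fun h => by rw [h, hj'.2.1] at hi'; omega
    have hxii' : x i = x i' := by rw [hi.2.1, hi'.2.1]
    have hxjj' : x j = x j' := by rw [hj.2.1, hj'.2.1]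
    -- the relabeled coloring σ'1, with σ'1 i = false and σ'1 j = true
    set σ'1 : Fin M → Bool := fun k => σ' (swapFn j j' (swapFn i i' k)) with hσ'1
    have hσ'1i : σ'1 i = false := by
      rw [hσ'1]
      simp only
      rw [swapFn_left, swapFn_eq_self hi'j hi'j']
      exact hi'.2.2
    have hσ'1j : σ'1 j = true := by
      rw [hσ'1]
      simp only
      rw [swapFn_eq_self hij.symm hi'j.symm, swapFn_left]
      exact hj'.2.2
    have hσ'1off : ∀ k, k ≠ i → k ≠ i' → k ≠ j → k ≠ j' → σ'1 k = σ' k := by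
      intro k h1 h2 h3 h4
      rw [hσ'1]
      simp only
      rw [swapFn_eq_self h1 h2, swapFn_eq_self h3 h4]
    have htail1 : ∀ y, tailC x s σ'1 y = tailC x s σ' y := by
      intro y
      have h1 : tailC x s σ'1 y
          = (s.filter fun k => y ≤ x k ∧ σ' (swapFn j j' k) = true).card :=
        swap_card x s (fun k => σ' (swapFn j j' k)) hi.1 hi'.1 hxii' (fun z => y ≤ z)
      have h2 : (s.filter fun k => y ≤ x k ∧ σ' (swapFn j j' k) = true).card
          = tailC x s σ' y :=
        swap_card x s σ' hj.1 hj'.1 hxjj' (fun z => y ≤ z)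
      rw [h1, h2]
    have hsite1 : ∀ y, siteC x s σ'1 y = siteC x s σ' y := by
      intro y
      have h1 : siteC x s σ'1 y
          = (s.filter fun k => x k = y ∧ σ' (swapFn j j' k) = true).card :=
        swap_card x s (fun k => σ' (swapFn j j' k)) hi.1 hi'.1 hxii' (fun z => z = y)
      have h2 : (s.filter fun k => x k = y ∧ σ' (swapFn j j' k) = true).card
          = siteC x s σ' y :=
        swap_card x s σ' hj.1 hj'.1 hxjj' (fun z => z = y)
      rw [h1, h2]
    have htot1 : (s.filter fun k => σ'1 k = true).card
        = (s.filter fun k => σ' k = true).card := by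
      rw [← tail_total x s σ'1 hC, ← tail_total x s σ' hC]
      exact htail1 C
    -- remove i and j
    have hjei : j ∈ s.erase i := mem_erase.mpr ⟨hij.symm, hj.1⟩
    set s2 : Finset (Fin M) := (s.erase i).erase j with hs2
    have hs2card : s2.card ≤ n := by
      rw [hs2, card_erase_of_mem hjei, card_erase_of_mem hi.1]
      have : 2 ≤ s.card := by
        have := Finset.one_lt_card.mpr ⟨i, hi.1, j, hj.1, hij⟩
        omega
      omega
    have his2 : i ∉ s2 := by
      rw [hs2]
      intro h
      exact (notMem_erase i s) (mem_of_mem_erase h)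
    have hjs2 : j ∉ s2 := notMem_erase j _
    have hs2sub : ∀ k, k ∈ s2 → k ∈ s := fun k hk =>
      mem_of_mem_erase (mem_of_mem_erase hk)
    have hmem_s2 : ∀ k, k ∈ s → k ≠ i → k ≠ j → k ∈ s2 := fun k h1 h2 h3 =>
      mem_erase.mpr ⟨h3, mem_erase.mpr ⟨h2, h1⟩⟩
    -- tail relations for s2
    have htails2σ : ∀ y, tailC x s σ y = tailC x s2 σ y + (if y ≤ ys then 1 else 0) := by
      intro y
      rw [tail_erase_true x s σ hi.1 hi.2.2 y, tail_erase_false x (s.erase i) σ hjei hj.2.2 y,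
        hi.2.1]
    have htails2σ'1 : ∀ y, tailC x s σ'1 y
        = tailC x s2 σ'1 y + (if y ≤ w then 1 else 0) := by
      intro y
      rw [tail_erase_false x s σ'1 hi.1 hσ'1i y,
        tail_erase_true x (s.erase i) σ'1 hjei hσ'1j y, hj.2.1]
    have H1' : ∀ y, tailC x s2 σ'1 y ≤ tailC x s2 σ y := by
      intro y
      have hA := htails2σ y
      have hB2 := htails2σ'1 y
      have hC2 := htail1 y
      by_cases h1 : y ≤ w
      · have h2 : y ≤ ys := by omega
        have := htail y
        simp only [if_pos h1, if_pos h2] at hA hB2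
        omega
      · by_cases h2 : y ≤ ys
        · have := htail_strict y (by omega) h2
          simp only [if_neg h1, if_pos h2] at hA hB2
          omega
        · have := htail_above y (by omega)
          simp only [if_neg h1, if_neg h2] at hA hB2
          omega
    have H2' : (s2.filter fun k => σ k = true).card
        = (s2.filter fun k => σ'1 k = true).card := by
      have e1 : (s.filter fun k => σ k = true).card
          = ((s.erase i).filter fun k => σ k = true).card + 1 :=
        count_erase_true s σ hi.1 hi.2.2
      have e2 : ((s.erase i).filter fun k => σ k = true).card
          = (s2.filter fun k => σ k = true).card :=
        count_erase_false (s.erase i) σ hjei hj.2.2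
      have e3 : (s.filter fun k => σ'1 k = true).card
          = ((s.erase i).filter fun k => σ'1 k = true).card :=
        count_erase_false s σ'1 hi.1 hσ'1i
      have e4 : ((s.erase i).filter fun k => σ'1 k = true).card
          = (s2.filter fun k => σ'1 k = true).card + 1 :=
        count_erase_true (s.erase i) σ'1 hjei hσ'1j
      omega
    obtain ⟨σ''0, P0, hoff0, hPoff0, hsite0, hsingle0, hpair0, hcolor0⟩ :=
      IH s2 hs2card σ'1 H1' H2'
    refine ⟨Function.update (Function.update σ''0 i false) j true,
      Function.update (Function.update P0 i (some j)) j (some i), ?_, ?_, ?_, ?_, ?_, ?_⟩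
    · intro k hk
      have hki : k ≠ i := fun h => hk (h ▸ hi.1)
      have hkj : k ≠ j := fun h => hk (h ▸ hj.1)
      rw [Function.update_of_ne hkj, Function.update_of_ne hki]
      rw [hoff0 k (fun h => hk (hs2sub k h))]
      exact hσ'1off k hki (fun h => hk (h ▸ hi'.1)) hkj (fun h => hk (h ▸ hj'.1))
    · intro k hk
      have hki : k ≠ i := fun h => hk (h ▸ hi.1)
      have hkj : k ≠ j := fun h => hk (h ▸ hj.1)
      rw [Function.update_of_ne hkj, Function.update_of_ne hki]
      exact hPoff0 k (fun h => hk (hs2sub k h))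
    · intro y
      set σ'' := Function.update (Function.update σ''0 i false) j true with hσ''def
      have hσ''i : σ'' i = false := by
        rw [hσ''def, Function.update_of_ne hij, Function.update_self]
      have hσ''j : σ'' j = true := by
        rw [hσ''def, Function.update_self]
      have e1 : siteC x s σ'' y = siteC x (s.erase i) σ'' y :=
        site_erase_false x s σ'' hi.1 hσ''i y
      have e2 : siteC x (s.erase i) σ'' y
          = siteC x s2 σ'' y + (if x j = y then 1 else 0) :=
        site_erase_true x (s.erase i) σ'' hjei hσ''j y
      have e3 : siteC x s2 σ'' y = siteC x s2 σ''0 y := by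
        unfold siteC
        congr 1
        apply filter_congr
        intro k hk
        have hki : k ≠ i := fun h => his2 (h ▸ hk)
        have hkj : k ≠ j := fun h => hjs2 (h ▸ hk)
        rw [hσ''def, Function.update_of_ne hkj, Function.update_of_ne hki]
      have e4 : siteC x s σ'1 y = siteC x (s.erase i) σ'1 y :=
        site_erase_false x s σ'1 hi.1 hσ'1i y
      have e5 : siteC x (s.erase i) σ'1 y
          = siteC x s2 σ'1 y + (if x j = y then 1 else 0) :=
        site_erase_true x (s.erase i) σ'1 hjei hσ'1j y
      have e6 := hsite0 y
      have e7 := hsite1 y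
      omega
    · intro k hk hP
      by_cases hki : k = i
      · exfalso
        subst hki
        rw [Function.update_of_ne hij, Function.update_self] at hP
        exact Option.some_ne_none _ hP
      by_cases hkj : k = j
      · exfalso
        subst hkj
        rw [Function.update_self] at hP
        exact Option.some_ne_none _ hP
      rw [Function.update_of_ne hkj, Function.update_of_ne hki] at hP ⊢
      exact hsingle0 k (hmem_s2 k hk hki hkj) hP
    · intro k hk l hP
      by_cases hki : k = i
      · subst hki
        rw [Function.update_of_ne hij, Function.update_self] at hP
        have hl : l = j := (Option.some.inj hP).symm
        subst hl
        exact ⟨hj.1, by rw [Function.update_self], hij⟩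
      by_cases hkj : k = j
      · subst hkj
        rw [Function.update_self] at hP
        have hl : l = i := (Option.some.inj hP).symm
        subst hl
        exact ⟨hi.1, by rw [Function.update_of_ne hij, Function.update_self], fun h => hij h.symm⟩
      rw [Function.update_of_ne hkj, Function.update_of_ne hki] at hP
      obtain ⟨hl1, hl2, hl3⟩ := hpair0 k (hmem_s2 k hk hki hkj) l hP
      have hli : l ≠ i := fun h => his2 (h ▸ hl1)
      have hlj : l ≠ j := fun h => hjs2 (h ▸ hl1)
      exact ⟨hs2sub l hl1, by rw [Function.update_of_ne hlj, Function.update_of_ne hli]; exact hl2,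
        hl3⟩
    · intro k hk l hP
      have hσ''i : (Function.update (Function.update σ''0 i false) j true) i = false := by
        rw [Function.update_of_ne hij, Function.update_self]
      have hσ''j : (Function.update (Function.update σ''0 i false) j true) j = true := by
        rw [Function.update_self]
      by_cases hki : k = i
      · subst hki
        rw [Function.update_of_ne hij, Function.update_self] at hP
        have hl : l = j := (Option.some.inj hP).symm
        subst hl
        left
        exact ⟨hi.2.2, hσ''i, hj.2.2, hσ''j, by rw [hi.2.1, hj.2.1]; omega⟩
      by_cases hkj : k = j
      · subst hkj
        rw [Function.update_self] at hP
        have hl : l = i := (Option.some.inj hP).symm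
        subst hl
        right
        exact ⟨hj.2.2, hσ''j, hi.2.2, hσ''i, by rw [hi.2.1, hj.2.1]; omega⟩
      rw [Function.update_of_ne hkj, Function.update_of_ne hki] at hP
      have hks2 : k ∈ s2 := hmem_s2 k hk hki hkj
      obtain ⟨hl1, _, _⟩ := hpair0 k hks2 l hP
      have hli : l ≠ i := fun h => his2 (h ▸ hl1)
      have hlj : l ≠ j := fun h => hjs2 (h ▸ hl1)
      have hcol := hcolor0 k hks2 l hP
      rw [Function.update_of_ne hkj, Function.update_of_ne hki,
        Function.update_of_ne hlj, Function.update_of_ne hli]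
      exact hcol

end TailSplitAux

/-- A splitting of a doubly-colored particle configuration `(x i, σ i, σ'' i)` into
married pairs and singletons, with no discrepancies.  Colors: `true` = `a`, `false` = `b`. -/
def IsSplitting {M : ℕ} (x : Fin M → ℤ) (σ σ'' : Fin M → Bool)
    (P : Fin M → Option (Fin M)) : Prop :=
  (∀ i, P i = none → σ i = σ'' i) ∧
  (∀ i j, P i = some j → P j = some i ∧ i ≠ j) ∧
  (∀ i j, P i = some j →
    (σ i = true ∧ σ'' i = false ∧ σ j = false ∧ σ'' j = true ∧ x j < x i) ∨
    (σ i = false ∧ σ'' i = true ∧ σ j = true ∧ σ'' j = false ∧ x i < x j))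

theorem tail_order_implies_splitting {M : ℕ} (x : Fin M → ℤ) (σ σ' : Fin M → Bool)
    (htail : ∀ y : ℤ,
      (Finset.univ.filter fun i => y ≤ x i ∧ σ' i = true).card ≤
      (Finset.univ.filter fun i => y ≤ x i ∧ σ i = true).card)
    (hcount : (Finset.univ.filter fun i => σ i = true).card
      = (Finset.univ.filter fun i => σ' i = true).card) :
    ∃ (σ'' : Fin M → Bool) (P : Fin M → Option (Fin M)),
      (∀ y : ℤ,
        (Finset.univ.filter fun i => x i = y ∧ σ'' i = true).card
          = (Finset.univ.filter fun i => x i = y ∧ σ' i = true).card) ∧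
      IsSplitting x σ σ'' P := by
  obtain ⟨σ'', P, _, _, hsite, hsingle, hpair, hcolor⟩ :=
    TailSplitAux.aux x σ (Finset.univ.card) Finset.univ le_rfl σ' htail hcount
  refine ⟨σ'', P, hsite, ?_, ?_, ?_⟩
  · intro i hi
    exact hsingle i (Finset.mem_univ i) hi
  · intro i j hij
    obtain ⟨_, h2, h3⟩ := hpair i (Finset.mem_univ i) j hij
    exact ⟨h2, h3⟩
  · intro i j hij
    exact hcolor i (Finset.mem_univ i) j hij
end

section
/- Let u', u : ℝ → ℝ≥0 be integrable with ∫u' = ∫u, and suppose F(r; u') ≤ F(r; u) for all r, where F(r; g) = ∫_r^∞ g. Then G_t ⋆ u' and G_t ⋆ u (heat-kernel convolutions with G_t(r,r') = e^{−(r−r')²/(2t)}/√(2πt)) satisfy F(r; G_t ⋆ u') ≤ F(r; G_t ⋆ u) for all r ∈ ℝ and t > 0. -/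
open MeasureTheory Set

/-- Heat-kernel convolution `(G_t ⋆ u)(r)`. -/
noncomputable def heatConv (t : ℝ) (u : ℝ → ℝ) (r : ℝ) : ℝ :=
  ∫ r' : ℝ, Real.exp (-(r - r')^2 / (2*t)) / Real.sqrt (2 * Real.pi * t) * u r'

/-- Right-tail integral `F(r; g) = ∫_r^∞ g`. -/
noncomputable def tailInt (g : ℝ → ℝ) (r : ℝ) : ℝ := ∫ y in Ioi r, g y

namespace HeatAux

open ENNReal

/-- The Gaussian kernel. -/
noncomputable def g (t x : ℝ) : ℝ := Real.exp (-x^2 / (2*t)) / Real.sqrt (2 * Real.pi * t)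

lemma g_nonneg (t x : ℝ) : 0 ≤ g t x :=
  div_nonneg (Real.exp_nonneg _) (Real.sqrt_nonneg _)

lemma g_cont (t : ℝ) : Continuous (g t) := by
  unfold g; fun_prop

lemma g_meas (t : ℝ) : Measurable (g t) := (g_cont t).measurable

lemma g_le' (ht : 0 < t) (x : ℝ) : g t x ≤ 1 / Real.sqrt (2 * Real.pi * t) := by
  have hc : 0 < Real.sqrt (2 * Real.pi * t) := by
    apply Real.sqrt_pos.2; positivity
  have hx : Real.exp (-x^2 / (2*t)) ≤ 1 := by
    rw [Real.exp_le_one_iff]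
    apply div_nonpos_of_nonpos_of_nonneg
    · simp [sq_nonneg]
    · positivity
  unfold g
  rw [div_le_div_iff₀ hc hc]
  nlinarith [hc, Real.exp_nonneg (-x^2 / (2*t))]

lemma g_integrable (ht : 0 < t) : Integrable (g t) := by
  have h : Integrable (fun x : ℝ => Real.exp (-(1/(2*t)) * x^2)) :=
    integrable_exp_neg_mul_sq (by positivity)
  have h2 := h.div_const (Real.sqrt (2 * Real.pi * t))
  refine h2.congr (Filter.Eventually.of_forall fun x => ?_)
  unfold g
  ring_nf

lemma tailInt_nonneg {u : ℝ → ℝ} (hu0 : ∀ x, 0 ≤ u x) (s : ℝ) : 0 ≤ tailInt u s :=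
  setIntegral_nonneg measurableSet_Ioi fun x _ => hu0 x

lemma tailInt_le {u : ℝ → ℝ} (hu : Integrable u) (hu0 : ∀ x, 0 ≤ u x) (s : ℝ) :
    tailInt u s ≤ ∫ x, u x :=
  setIntegral_le_integral hu (Filter.Eventually.of_forall hu0)

lemma tail_lintegral {u : ℝ → ℝ} (hu : Integrable u) (hu0 : ∀ x, 0 ≤ u x) (s : ℝ) :
    ∫⁻ r' in Ioi s, ENNReal.ofReal (u r') = ENNReal.ofReal (tailInt u s) := by
  have h : tailInt u s = (∫⁻ r' in Ioi s, ENNReal.ofReal (u r')).toReal := by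
    rw [tailInt]
    exact integral_eq_lintegral_of_nonneg_ae (Filter.Eventually.of_forall hu0)
      hu.aestronglyMeasurable.restrict
  rw [h, ENNReal.ofReal_toReal]
  exact ((lintegral_mono' Measure.restrict_le_self le_rfl).trans_lt hu.lintegral_lt_top).ne

/-- change of variables: tail of shifted Gaussian. -/
lemma shift (ht : 0 < t) (r a : ℝ) :
    ∫⁻ y in Ioi r, ENNReal.ofReal (g t (y - a))
      = ∫⁻ s in Iio a, ENNReal.ofReal (g t (r - s)) := by
  have hφ : MeasurePreserving (fun s : ℝ => (r + a) - s) volume volume :=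
    Measure.measurePreserving_sub_left volume (r + a)
  have hemb : MeasurableEmbedding (fun s : ℝ => (r + a) - s) :=
    (MeasurableEquiv.subLeft (r + a)).measurableEmbedding
  have hpre : (fun s : ℝ => (r + a) - s) ⁻¹' (Ioi r) = Iio a := by
    ext s; simp only [mem_preimage, mem_Ioi, mem_Iio]; constructor <;> intro h <;> linarith
  have := hφ.setLIntegral_comp_preimage_emb hemb
    (fun y => ENNReal.ofReal (g t (y - a))) (Ioi r)
  rw [hpre] at this
  rw [← this]
  refine setLIntegral_congr_fun measurableSet_Iio (fun s _ => ?_)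
  congr 1
  ring_nf

/-- Key identity: the tail of the heat convolution is the Gaussian average of the tail. -/
lemma key (ht : 0 < t) (u : ℝ → ℝ) (hum : Measurable u) (hu : Integrable u)
    (hu0 : ∀ x, 0 ≤ u x) (r : ℝ) :
    tailInt (heatConv t u) r
      = (∫⁻ s, ENNReal.ofReal (g t (r - s)) * ENNReal.ofReal (tailInt u s)).toReal := by
  classical
  set c := Real.sqrt (2 * Real.pi * t) with hc
  -- the product-measurable integrand
  set F : ℝ × ℝ → ℝ≥0∞ :=
    fun p => ENNReal.ofReal (g t (p.1 - p.2)) * ENNReal.ofReal (u p.2) with hF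
  have hFmeas : Measurable F := by
    apply Measurable.mul (f := fun p : ℝ × ℝ => ENNReal.ofReal (g t (p.1 - p.2)))
      (g := fun p : ℝ × ℝ => ENNReal.ofReal (u p.2))
    · exact ((g_meas t).comp (measurable_fst.sub measurable_snd)).ennreal_ofReal
    · exact (hum.comp measurable_snd).ennreal_ofReal
  set L : ℝ → ℝ≥0∞ := fun y => ∫⁻ r', F (y, r') with hL
  have hLmeas : Measurable L := by
    apply Measurable.lintegral_prod_right
    exact hFmeas
  have hLlt : ∀ y, L y < ∞ := by
    intro y
    have hbound : L y ≤ ENNReal.ofReal (1 / c) * ∫⁻ r', ENNReal.ofReal (u r') := by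
      rw [← lintegral_const_mul' _ _ ENNReal.ofReal_ne_top]
      refine lintegral_mono fun r' => ?_
      exact mul_le_mul_left (ENNReal.ofReal_le_ofReal (g_le' ht _)) _
    exact hbound.trans_lt (ENNReal.mul_lt_top ENNReal.ofReal_lt_top hu.lintegral_lt_top)
  have heat_eq : ∀ y, heatConv t u y = (L y).toReal := by
    intro y
    have h1 : heatConv t u y = ∫ r', g t (y - r') * u r' := by
      simp only [heatConv, g]
    have hmeas : AEStronglyMeasurable (fun r' => g t (y - r') * u r') volume := by
      apply Measurable.aestronglyMeasurable
      exact ((g_meas t).comp (measurable_const.sub measurable_id)).mul hum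
    rw [h1, integral_eq_lintegral_of_nonneg_ae
      (Filter.Eventually.of_forall fun r' => mul_nonneg (g_nonneg t _) (hu0 r')) hmeas]
    congr 1
    refine lintegral_congr fun r' => ?_
    rw [ENNReal.ofReal_mul (g_nonneg t _)]
  -- tail of heatConv as lintegral
  have step2 : tailInt (heatConv t u) r = (∫⁻ y in Ioi r, L y).toReal := by
    rw [tailInt]
    have := integral_eq_lintegral_of_nonneg_ae (μ := volume.restrict (Ioi r))
      (f := heatConv t u)
      (Filter.Eventually.of_forall fun y => by rw [heat_eq y]; exact ENNReal.toReal_nonneg)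
      (by
        have : heatConv t u = fun y => (L y).toReal := funext heat_eq
        rw [this]
        exact hLmeas.ennreal_toReal.aestronglyMeasurable)
    rw [this]
    congr 1
    refine lintegral_congr fun y => ?_
    rw [heat_eq y, ENNReal.ofReal_toReal (hLlt y).ne]
  rw [step2]
  congr 1
  -- Tonelli swap no. 1
  have swap1 : ∫⁻ y in Ioi r, L y = ∫⁻ r', ∫⁻ y in Ioi r, F (y, r') := by
    exact lintegral_lintegral_swap hFmeas.aemeasurable
  rw [swap1]
  -- compute inner integral: pull out u, change variables
  have inner1 : ∀ r', ∫⁻ y in Ioi r, F (y, r')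
      = (∫⁻ s in Iio r', ENNReal.ofReal (g t (r - s))) * ENNReal.ofReal (u r') := by
    intro r'
    simp only [hF]
    rw [lintegral_mul_const' _ _ ENNReal.ofReal_ne_top, shift ht r r']
  -- second swap via indicator
  set H : ℝ × ℝ → ℝ≥0∞ :=
    ({p : ℝ × ℝ | p.2 < p.1}).indicator
      (fun p => ENNReal.ofReal (g t (r - p.2)) * ENNReal.ofReal (u p.1)) with hH
  have hSmeas : MeasurableSet {p : ℝ × ℝ | p.2 < p.1} :=
    measurableSet_lt measurable_snd measurable_fst
  have hHmeas : Measurable H := by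
    apply Measurable.indicator _ hSmeas
    exact (((g_meas t).comp (measurable_const.sub measurable_snd)).ennreal_ofReal).mul
      ((hum.comp measurable_fst).ennreal_ofReal)
  have hH1 : ∀ r', ∫⁻ s, H (r', s)
      = (∫⁻ s in Iio r', ENNReal.ofReal (g t (r - s))) * ENNReal.ofReal (u r') := by
    intro r'
    rw [← lintegral_mul_const' _ _ ENNReal.ofReal_ne_top,
      ← lintegral_indicator measurableSet_Iio _]
    refine lintegral_congr fun s => ?_
    by_cases h : s < r' <;>
      simp [hH, Set.indicator, h, mem_Iio]
  have hH2 : ∀ s, ∫⁻ r', H (r', s)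
      = ENNReal.ofReal (g t (r - s)) * ENNReal.ofReal (tailInt u s) := by
    intro s
    have : ∀ r', H (r', s) = (Ioi s).indicator
        (fun r' => ENNReal.ofReal (g t (r - s)) * ENNReal.ofReal (u r')) r' := by
      intro r'
      by_cases h : s < r' <;> simp [hH, Set.indicator, h, mem_Ioi]
    simp_rw [this]
    rw [lintegral_indicator measurableSet_Ioi _,
      lintegral_const_mul' _ _ ENNReal.ofReal_ne_top, tail_lintegral hu hu0 s]
  calc ∫⁻ r', ∫⁻ y in Ioi r, F (y, r')
      = ∫⁻ r', ∫⁻ s, H (r', s) := by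
        refine lintegral_congr fun r' => ?_; rw [inner1 r', hH1 r']
    _ = ∫⁻ s, ∫⁻ r', H (r', s) := lintegral_lintegral_swap hHmeas.aemeasurable
    _ = ∫⁻ s, ENNReal.ofReal (g t (r - s)) * ENNReal.ofReal (tailInt u s) := by
        exact lintegral_congr fun s => hH2 s

end HeatAux

/-- Convolution with the Gaussian heat kernel preserves the right-tail partial order
among nonnegative integrable functions of equal total mass. -/
theorem heat_kernel_preserves_order (u' u : ℝ → ℝ)
    (hu' : Integrable u') (hu : Integrable u)
    (hu'0 : ∀ r, 0 ≤ u' r) (hu0 : ∀ r, 0 ≤ u r)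
    (hmass : ∫ r, u' r = ∫ r, u r)
    (hord : ∀ r, tailInt u' r ≤ tailInt u r) :
    ∀ t : ℝ, 0 < t → ∀ r : ℝ, tailInt (heatConv t u') r ≤ tailInt (heatConv t u) r := by
  classical
  open HeatAux in
  intro t ht r
  -- measurable representatives
  set v' : ℝ → ℝ := fun x => max (hu'.1.aemeasurable.mk u' x) 0 with hv'def
  set v : ℝ → ℝ := fun x => max (hu.1.aemeasurable.mk u x) 0 with hvdef
  have hv'm : Measurable v' := (hu'.1.aemeasurable.measurable_mk).max measurable_const
  have hvm : Measurable v := (hu.1.aemeasurable.measurable_mk).max measurable_const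
  have hv'ae : v' =ᵐ[volume] u' := by
    filter_upwards [hu'.1.aemeasurable.ae_eq_mk] with x hx
    simp [hv'def, ← hx, max_eq_left (hu'0 x)]
  have hvae : v =ᵐ[volume] u := by
    filter_upwards [hu.1.aemeasurable.ae_eq_mk] with x hx
    simp [hvdef, ← hx, max_eq_left (hu0 x)]
  have hv'0 : ∀ x, 0 ≤ v' x := fun x => le_max_right _ _
  have hv0 : ∀ x, 0 ≤ v x := fun x => le_max_right _ _
  have hv'int : Integrable v' := hu'.congr hv'ae.symm
  have hvint : Integrable v := hu.congr hvae.symm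
  have htail' : ∀ s, tailInt v' s = tailInt u' s := fun s =>
    integral_congr_ae (ae_restrict_of_ae hv'ae)
  have htail : ∀ s, tailInt v s = tailInt u s := fun s =>
    integral_congr_ae (ae_restrict_of_ae hvae)
  have hconv' : heatConv t v' = heatConv t u' := by
    funext y
    refine integral_congr_ae ?_
    filter_upwards [hv'ae] with x hx
    rw [hx]
  have hconv : heatConv t v = heatConv t u := by
    funext y
    refine integral_congr_ae ?_
    filter_upwards [hvae] with x hx
    rw [hx]
  rw [← hconv', ← hconv,
    HeatAux.key ht v' hv'm hv'int hv'0 r, HeatAux.key ht v hvm hvint hv0 r]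
  have hle : (∫⁻ s, ENNReal.ofReal (HeatAux.g t (r - s)) * ENNReal.ofReal (tailInt v' s))
      ≤ ∫⁻ s, ENNReal.ofReal (HeatAux.g t (r - s)) * ENNReal.ofReal (tailInt v s) := by
    refine lintegral_mono fun s => ?_
    refine mul_le_mul_right (ENNReal.ofReal_le_ofReal ?_) _
    rw [htail' s, htail s]; exact hord s
  have hgint : Integrable (fun s => HeatAux.g t (r - s)) := by
    exact (integrable_comp_sub_left (HeatAux.g t) r).2 (HeatAux.g_integrable ht)
  have hfin : (∫⁻ s, ENNReal.ofReal (HeatAux.g t (r - s)) * ENNReal.ofReal (tailInt v s)) ≠ ⊤ := by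
    have hbd : (∫⁻ s, ENNReal.ofReal (HeatAux.g t (r - s)) * ENNReal.ofReal (tailInt v s))
        ≤ (∫⁻ s, ENNReal.ofReal (HeatAux.g t (r - s))) * ENNReal.ofReal (∫ x, v x) := by
      rw [← lintegral_mul_const' _ _ ENNReal.ofReal_ne_top]
      refine lintegral_mono fun s => ?_
      exact mul_le_mul_right
        (ENNReal.ofReal_le_ofReal (HeatAux.tailInt_le hvint hv0 s)) _
    exact (hbd.trans_lt
      (ENNReal.mul_lt_top hgint.lintegral_lt_top ENNReal.ofReal_lt_top)).ne
  exact ENNReal.toReal_mono hfin hle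
end

section
/- Let φ : ℝ → ℝ≥0 be integrable, 0 < M_0 < ∫φ, and suppose (u,v) with u+v = φ, ∫u = M_0, u, v ∈ 𝒰 (continuous with supports being open intervals (L,R_u) and (D_v,E) with L < D_v < R_u < E, positive inside). Given 0 < m < M_0 small enough, define H and Z by ∫_{−∞}^{H} u = m and ∫_{Z}^{∞} v = m (with H < Z), and set f* = u + v·1_{[Z,∞)} − u·1_{(−∞,H]}, g* = v + u·1_{(−∞,H]} − v·1_{[Z,∞)}. Then f*+g* = φ, ∫f* = M_0, and (u,v) ≼ (f*,g*), i.e., F(r;u) ≤ F(r;f*) for all r. -/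
open MeasureTheory Set

/-- Proposition 5.3(1), first part: the pair `(f*, g*)` obtained by transferring the
leftmost `m`-mass of `u` to `g*` and the rightmost `m`-mass of `v` to `f*` belongs
to `ℬ(φ, M₀)` and dominates `(u,v)`. -/
theorem upper_transfer_dominates (φ u v : ℝ → ℝ) (M₀ m L Ru Dv E H Z : ℝ)
    (hucont : Continuous u) (hvcont : Continuous v)
    (hu : Integrable u) (hv : Integrable v)
    (hu0 : ∀ r, 0 ≤ u r) (hv0 : ∀ r, 0 ≤ v r)
    (hsuppu : Function.support u = Ioo L Ru)
    (hsuppv : Function.support v = Ioo Dv E)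
    (hLD : L < Dv) (hDR : Dv < Ru) (hRE : Ru < E)
    (hφ : ∀ r, φ r = u r + v r)
    (humass : ∫ r, u r = M₀)
    (hM₀ : 0 < M₀) (hM₀' : M₀ < ∫ r, φ r)
    (hm : 0 < m) (hmM : m < M₀)
    (hH : ∫ r in Iic H, u r = m) (hZ : ∫ r in Ici Z, v r = m) (hHZ : H < Z) :
    (∀ r, (u r + indicator (Ici Z) v r - indicator (Iic H) u r)
        + (v r + indicator (Iic H) u r - indicator (Ici Z) v r) = φ r) ∧
    (∫ r, (u r + indicator (Ici Z) v r - indicator (Iic H) u r) = M₀) ∧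
    (∀ r, tailInt u r
      ≤ tailInt (fun s => u s + indicator (Ici Z) v s - indicator (Iic H) u s) r) := by

  have hiU : Integrable ((Iic H).indicator u) := hu.indicator measurableSet_Iic
  have hiV : Integrable ((Ici Z).indicator v) := hv.indicator measurableSet_Ici
  refine ⟨?_, ?_, ?_⟩
  · intro r; rw [hφ r]; ring
  · have e1 := integral_sub (μ := volume)
      (show Integrable (fun r => u r + (Ici Z).indicator v r) from hu.add hiV) hiU
    have e2 := integral_add (μ := volume) hu hiV
    rw [e1, e2, integral_indicator measurableSet_Ici, integral_indicator measurableSet_Iic,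
      hH, hZ, humass]
    ring
  · intro r
    have hkey : ∫ s in Ioi r, (Iic H).indicator u s ≤ ∫ s in Ioi r, (Ici Z).indicator v s := by
      rw [setIntegral_indicator measurableSet_Iic, setIntegral_indicator measurableSet_Ici]
      rcases lt_or_ge r Z with hrZ | hrZ
      · have h1 : Ioi r ∩ Ici Z = Ici Z :=
          inter_eq_self_of_subset_right (fun x hx => lt_of_lt_of_le hrZ hx)
        rw [h1, hZ]
        calc ∫ s in Ioi r ∩ Iic H, u s ≤ ∫ s in Iic H, u s := by
              refine setIntegral_mono_set hu.integrableOn ?_ ?_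
              · exact Filter.Eventually.of_forall hu0
              · exact HasSubset.Subset.eventuallyLE inter_subset_right
          _ = m := hH
      · have h1 : Ioi r ∩ Iic H = (∅ : Set ℝ) := by
          ext x; simp only [mem_inter_iff, mem_Ioi, mem_Iic, mem_empty_iff_false, iff_false]
          rintro ⟨hx1, hx2⟩
          exact absurd (hx2.trans_lt (hHZ.trans_le (hrZ.trans hx1.le))) (lt_irrefl x)
        rw [h1]
        simp only [Measure.restrict_empty, integral_zero_measure]
        exact setIntegral_nonneg (measurableSet_Ioi.inter measurableSet_Ici)
          (fun x _ => hv0 x)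
    have heq : tailInt (fun s => u s + indicator (Ici Z) v s - indicator (Iic H) u s) r
        = tailInt u r + (∫ s in Ioi r, (Ici Z).indicator v s)
          - ∫ s in Ioi r, (Iic H).indicator u s := by
      unfold tailInt
      have e1 := integral_sub (μ := volume.restrict (Ioi r))
        (show Integrable (fun s => u s + (Ici Z).indicator v s) (volume.restrict (Ioi r)) from
          hu.integrableOn.add hiV.integrableOn)
        hiU.integrableOn
      have e2 := integral_add (μ := volume.restrict (Ioi r)) hu.integrableOn hiV.integrableOn
      rw [e1, e2]
    rw [heq]
    linarith
end

section
/- With f*, g*, u, v, H, Z as in the previous statement, and additionally a pair (u',v') with u'+v' = φ, ∫u' = M_0, satisfying F(r;u') ≤ F(r;u) + m for all r, we have (u',v') ≼ (f*,g*): for r ≤ H, F(r;f*) = M_0 ≥ F(r;u'); for H ≤ r ≤ Z, F(r;f*) = F(r;u) + m ≥ F(r;u'); and for r ≥ Z, f* = φ on (Z,∞) hence F(r;f*) = ∫_r^∞ φ ≥ F(r;u'). -/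
open MeasureTheory Set

/-- Proposition 5.3(1), second part: if `(u',v') ≼ (u,v)` modulo `m` in `ℬ(φ, M₀)`,
then `(u',v')` is exactly dominated by the transferred pair `(f*, g*)`. -/
theorem upper_transfer_dominates_modulo (φ u v u' v' : ℝ → ℝ) (M₀ m L Ru Dv E H Z : ℝ)
    (hucont : Continuous u) (hvcont : Continuous v)
    (hu : Integrable u) (hv : Integrable v)
    (hu0 : ∀ r, 0 ≤ u r) (hv0 : ∀ r, 0 ≤ v r)
    (hsuppu : Function.support u = Ioo L Ru)
    (hsuppv : Function.support v = Ioo Dv E)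
    (hLD : L < Dv) (hDR : Dv < Ru) (hRE : Ru < E)
    (hφ : ∀ r, φ r = u r + v r)
    (humass : ∫ r, u r = M₀)
    (hM₀ : 0 < M₀) (hM₀' : M₀ < ∫ r, φ r)
    (hm : 0 < m) (hmM : m < M₀)
    (hH : ∫ r in Iic H, u r = m) (hZ : ∫ r in Ici Z, v r = m) (hHZ : H < Z)
    (hu' : Integrable u') (hv' : Integrable v')
    (hu'0 : ∀ r, 0 ≤ u' r) (hv'0 : ∀ r, 0 ≤ v' r)
    (hsum' : ∀ r, u' r + v' r = φ r)
    (hu'mass : ∫ r, u' r = M₀)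
    (hmod : ∀ r, tailInt u' r ≤ tailInt u r + m) :
    (∀ r ≤ H, tailInt (fun s => u s + indicator (Ici Z) v s - indicator (Iic H) u s) r = M₀) ∧
    (∀ r, H ≤ r → r ≤ Z →
      tailInt (fun s => u s + indicator (Ici Z) v s - indicator (Iic H) u s) r
        = tailInt u r + m) ∧
    (∀ r, Z < r → u r + indicator (Ici Z) v r - indicator (Iic H) u r = φ r) ∧
    (∀ r, tailInt u' r
      ≤ tailInt (fun s => u s + indicator (Ici Z) v s - indicator (Iic H) u s) r) := by

  have hφint : Integrable φ := (hu.add hv).congr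
    (Filter.Eventually.of_forall fun r => (hφ r).symm)
  have hvZ : Integrable (indicator (Ici Z) v) := hv.indicator measurableSet_Ici
  have huH : Integrable (indicator (Iic H) u) := hu.indicator measurableSet_Iic
  have key : ∀ r, tailInt (fun s => u s + indicator (Ici Z) v s - indicator (Iic H) u s) r
      = tailInt u r + (∫ s in Ioi r ∩ Ici Z, v s) - (∫ s in Ioc r H, u s) := by
    intro r
    unfold tailInt
    have h1 : ∫ y in Ioi r, (u y + indicator (Ici Z) v y - indicator (Iic H) u y) =
        (∫ y in Ioi r, (u y + indicator (Ici Z) v y)) - ∫ y in Ioi r, indicator (Iic H) u y :=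
      integral_sub ((hu.add hvZ).integrableOn) huH.integrableOn
    have h2 : ∫ y in Ioi r, (u y + indicator (Ici Z) v y) =
        (∫ y in Ioi r, u y) + ∫ y in Ioi r, indicator (Ici Z) v y :=
      integral_add hu.integrableOn hvZ.integrableOn
    rw [h1, h2, setIntegral_indicator measurableSet_Ici,
        setIntegral_indicator measurableSet_Iic, Set.Ioi_inter_Iic]
  have hvtail : ∀ r ≤ Z, (∫ s in Ioi r ∩ Ici Z, v s) = m := by
    intro r hr
    rcases eq_or_lt_of_le hr with rfl | hr
    · rw [Set.inter_eq_left.mpr (Set.Ioi_subset_Ici le_rfl),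
        ← integral_Ici_eq_integral_Ioi, hZ]
    · have he : Ioi r ∩ Ici Z = Ici Z :=
        Set.inter_eq_right.mpr fun x (hx : Z ≤ x) => lt_of_lt_of_le hr hx
      rw [he, hZ]
  have hIic : ∀ r, (∫ s in Iic r, u s) + tailInt u r = M₀ := by
    intro r
    rw [← humass]
    exact intervalIntegral.integral_Iic_add_Ioi hu.integrableOn hu.integrableOn
  have case1 : ∀ r ≤ H,
      tailInt (fun s => u s + indicator (Ici Z) v s - indicator (Iic H) u s) r = M₀ := by
    intro r hr
    rw [key r, hvtail r (by linarith)]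
    have hsplit : (∫ s in Iic r, u s) + (∫ s in Ioc r H, u s) = m := by
      rw [← setIntegral_union (Set.Iic_disjoint_Ioc le_rfl) measurableSet_Ioc
        hu.integrableOn hu.integrableOn, Set.Iic_union_Ioc_eq_Iic hr, hH]
    have := hIic r
    linarith
  have case2 : ∀ r, H ≤ r → r ≤ Z →
      tailInt (fun s => u s + indicator (Ici Z) v s - indicator (Iic H) u s) r
        = tailInt u r + m := by
    intro r h1 h2
    rw [key r, hvtail r h2, Set.Ioc_eq_empty (by exact fun h => absurd h1 (not_le.mpr h)),
      setIntegral_empty]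
    ring
  have case3 : ∀ r, Z < r →
      u r + indicator (Ici Z) v r - indicator (Iic H) u r = φ r := by
    intro r hr
    rw [indicator_of_mem (show r ∈ Ici Z from le_of_lt hr),
      indicator_of_notMem (show r ∉ Iic H by simp only [mem_Iic, not_le]; linarith),
      hφ r]
    ring
  refine ⟨case1, case2, case3, ?_⟩
  intro r
  rcases le_or_gt r H with h1 | h1
  · rw [case1 r h1, ← hu'mass]
    exact setIntegral_le_integral hu' (Filter.Eventually.of_forall hu'0)
  rcases le_or_gt r Z with h2 | h2
  · rw [case2 r h1.le h2]
    exact hmod r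
  · have heq : tailInt (fun s => u s + indicator (Ici Z) v s - indicator (Iic H) u s) r
        = tailInt φ r := by
      unfold tailInt
      refine setIntegral_congr_fun measurableSet_Ioi fun s hs => ?_
      have : Z < s := lt_trans h2 hs
      exact case3 s this
    rw [heq]
    exact setIntegral_mono hu'.integrableOn hφint.integrableOn
      (fun x => by have := hv'0 x; have := hsum' x; linarith)
end
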